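/- Let σ > 0, λ > 0, let x0 : ℕ → ℝ be a fixed real sequence, let (W_i)_{i∈ℕ} be i.i.d. centered Gaussian random variables of variance σ², and set Y_i = x0_i + W_i. Let h : ℕ → (0,∞) satisfy h(P) → 0 as P → ∞. Then (1/P)·(E[SCORE((Y_1,…,Y_P), λ, h(P))] − E[‖HT((Y_1,…,Y_P),λ) − (x0_1,…,x0_P)‖²]) → 0 as P → ∞ (asymptotic unbiasedness of SCORE as a risk estimator). -/

import Mathlib

open MeasureTheory ProbabilityTheory Filter Real

/-- Scalar hard thresholding at threshold `lam`. -/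
noncomputable def HT (lam y : ℝ) : ℝ := if |y| < lam then 0 else y

/-- The DOF estimator `EDOF_HT(y, λ, h)` for hard thresholding. -/
noncomputable def EDOF (σ lam h : ℝ) (P : ℕ) (y : ℕ → ℝ) : ℝ :=
  (∑ i ∈ Finset.range P, if lam < |y i| then (1 : ℝ) else 0) +
    lam * Real.sqrt (σ ^ 2 + h ^ 2) / (Real.sqrt (2 * π) * σ * h) *
      ∑ i ∈ Finset.range P,
        (Real.exp (-(y i + lam) ^ 2 / (2 * h ^ 2)) +
          Real.exp (-(y i - lam) ^ 2 / (2 * h ^ 2)))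

/-- Covariance of two real random variables. -/
noncomputable def cov {Ω : Type*} [MeasurableSpace Ω] (μ : Measure Ω) (X Y : Ω → ℝ) : ℝ :=
  ∫ ω, (X ω - ∫ x, X x ∂μ) * (Y ω - ∫ x, Y x ∂μ) ∂μ

/-- The degrees of freedom of hard thresholding:
`DOF_HT(x0, λ) = ∑ i Cov(Y i, HT(Y i, λ)) / σ²` where `Y` is the (random) observation. -/
noncomputable def DOF {Ω : Type*} [MeasurableSpace Ω] (μ : Measure Ω) (σ lam : ℝ) (P : ℕ)
    (Y : ℕ → Ω → ℝ) : ℝ :=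
  ∑ i ∈ Finset.range P, cov μ (Y i) (fun ω => HT lam (Y i ω)) / σ ^ 2

/-- The Stein COnsistent Risk Estimator:
`SCORE(y, λ, h) = ‖y − HT(y,λ)‖² − P σ² + 2 σ² EDOF_HT(y, λ, h)`. -/
noncomputable def SCORE (σ lam h : ℝ) (P : ℕ) (y : ℕ → ℝ) : ℝ :=
  (∑ i ∈ Finset.range P, (y i - HT lam (y i)) ^ 2) - P * σ ^ 2 +
    2 * σ ^ 2 * EDOF σ lam h P y


section AUX
open MeasureTheory ProbabilityTheory Filter Real Set

namespace ScoreAux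

lemma measurable_HTfun (lam : ℝ) : Measurable (fun y : ℝ => if |y| < lam then (0:ℝ) else y) :=
  Measurable.ite (measurableSet_lt measurable_id.abs measurable_const) measurable_const
    measurable_id

section basics
variable {σ : ℝ} (hσ : 0 < σ)
include hσ

lemma int_exp : Integrable (fun x : ℝ => rexp (-x^2/(2*σ^2))) := by
  have h : ∀ x : ℝ, -x^2/(2*σ^2) = -((2*σ^2)⁻¹) * x^2 := by
    intro x; field_simp
  simp_rw [h]
  exact integrable_exp_neg_mul_sq (by positivity)

lemma int_id_exp : Integrable (fun x : ℝ => x * rexp (-x^2/(2*σ^2))) := by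
  have h : ∀ x : ℝ, -x^2/(2*σ^2) = -((2*σ^2)⁻¹) * x^2 := by
    intro x; field_simp
  simp_rw [h]
  have := integrable_rpow_mul_exp_neg_mul_sq (b := (2*σ^2)⁻¹) (by positivity)
    (s := 1) (by norm_num)
  simpa [Real.rpow_one] using this

lemma int_abs_exp : Integrable (fun x : ℝ => |x| * rexp (-x^2/(2*σ^2))) := by
  have := (int_id_exp hσ).abs
  refine this.congr ?_
  filter_upwards with x
  rw [abs_mul, abs_of_pos (exp_pos _)]

lemma int_sq_exp : Integrable (fun x : ℝ => x^2 * rexp (-x^2/(2*σ^2))) := by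
  have h : ∀ x : ℝ, -x^2/(2*σ^2) = -((2*σ^2)⁻¹) * x^2 := by
    intro x; field_simp
  simp_rw [h]
  have := integrable_rpow_mul_exp_neg_mul_sq (b := (2*σ^2)⁻¹) (by positivity)
    (s := 2) (by norm_num)
  have h2 : ∀ x : ℝ, x ^ (2:ℝ) = x ^ 2 := fun x => by
    rw [show (2:ℝ) = ((2:ℕ):ℝ) by norm_num, Real.rpow_natCast]
  simpa [h2] using this

/-- domination lemma -/
lemma int_dom {f : ℝ → ℝ} (hf : AEStronglyMeasurable f volume) (c0 c1 c2 : ℝ)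
    (hb : ∀ x, |f x| ≤ (c0 + c1*|x| + c2*x^2) * rexp (-x^2/(2*σ^2))) :
    Integrable f := by
  refine Integrable.mono' (g := fun x => c0 * rexp (-x^2/(2*σ^2))
      + (c1 * (|x| * rexp (-x^2/(2*σ^2))) + c2 * (x^2 * rexp (-x^2/(2*σ^2))))) ?_ hf ?_
  · exact ((int_exp hσ).const_mul c0).add
      (((int_abs_exp hσ).const_mul c1).add ((int_sq_exp hσ).const_mul c2))
  · filter_upwards with x
    rw [Real.norm_eq_abs]
    calc |f x| ≤ (c0 + c1*|x| + c2*x^2) * rexp (-x^2/(2*σ^2)) := hb x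
    _ = _ := by ring

end basics

end ScoreAux


namespace ScoreAux2

variable {σ : ℝ}

lemma tendsto_exp_gauss (hσ : 0 < σ) :
    Tendsto (fun x : ℝ => rexp (-x^2/(2*σ^2))) atTop (nhds 0) := by
  have hb : (0:ℝ) < (2*σ^2)⁻¹ := by positivity
  have h : ∀ x : ℝ, -x^2/(2*σ^2) = -((2*σ^2)⁻¹) * x^2 := by intro x; field_simp
  simp_rw [h]
  apply Real.tendsto_exp_atBot.comp
  apply Tendsto.const_mul_atTop_of_neg (by simpa using neg_lt_zero.2 hb)
  exact tendsto_pow_atTop (by norm_num)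

lemma tendsto_poly_gauss (hσ : 0 < σ) (m : ℝ) :
    Tendsto (fun x : ℝ => (m + x) * rexp (-x^2/(2*σ^2))) atTop (nhds 0) := by
  have hb : (0:ℝ) < (2*σ^2)⁻¹ := by positivity
  have h : ∀ x : ℝ, -x^2/(2*σ^2) = -((2*σ^2)⁻¹) * x^2 := by intro x; field_simp
  have h1 := tendsto_exp_gauss hσ
  have h2 : Tendsto (fun x : ℝ => x * rexp (-x^2/(2*σ^2))) atTop (nhds 0) := by
    have hlo := rpow_mul_exp_neg_mul_sq_isLittleO_exp_neg hb 1
    have htail : Tendsto (fun x : ℝ => rexp (-(1/2) * x)) atTop (nhds 0) := by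
      apply Real.tendsto_exp_atBot.comp
      apply Tendsto.const_mul_atTop_of_neg (by norm_num) tendsto_id
    have := hlo.isBigO.trans_tendsto htail
    simp_rw [h]
    simpa [Real.rpow_one] using this
  have := (h1.const_mul m).add h2
  simpa [add_mul] using this

lemma tendsto_poly_gauss_bot (hσ : 0 < σ) (m : ℝ) :
    Tendsto (fun x : ℝ => (m + x) * rexp (-x^2/(2*σ^2))) atBot (nhds 0) := by
  have h := (tendsto_poly_gauss hσ (-m)).comp tendsto_neg_atBot_atTop
  have h2 : Tendsto (fun x : ℝ => -(((fun x : ℝ => (-m + x) * rexp (-x^2/(2*σ^2))) ∘ Neg.neg) x))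
      atBot (nhds 0) := by simpa using h.neg
  refine Tendsto.congr ?_ h2
  intro x
  simp only [Function.comp_apply, neg_sq]
  ring

/-- The key IBP derivative fact. -/
lemma hasDerivAt_F (hσ : 0 < σ) (m x : ℝ) :
    HasDerivAt (fun x : ℝ => -σ^2 * ((m + x) * rexp (-x^2/(2*σ^2))))
      (((m + x) * x - σ^2) * rexp (-x^2/(2*σ^2))) x := by
  have h1 : HasDerivAt (fun x : ℝ => -x^2/(2*σ^2)) (-x/σ^2) x := by
    have := ((hasDerivAt_pow 2 x).neg).div_const (2*σ^2)
    refine this.congr_deriv ?_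
    field_simp; ring
  have h2 : HasDerivAt (fun x : ℝ => rexp (-x^2/(2*σ^2)))
      (rexp (-x^2/(2*σ^2)) * (-x/σ^2)) x := h1.exp
  have h3 : HasDerivAt (fun x : ℝ => (m + x) * rexp (-x^2/(2*σ^2)))
      (1 * rexp (-x^2/(2*σ^2)) + (m + x) * (rexp (-x^2/(2*σ^2)) * (-x/σ^2))) x :=
    ((hasDerivAt_id x).const_add m).mul h2
  have h4 := h3.const_mul (-σ^2)
  refine h4.congr_deriv ?_
  field_simp; ring

lemma int_ibp (hσ : 0 < σ) (m : ℝ) :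
    Integrable (fun x : ℝ => ((m + x) * x - σ^2) * rexp (-x^2/(2*σ^2))) := by
  apply ScoreAux.int_dom hσ ?_ (σ^2) |m| 1
  · intro x
    rw [abs_mul, abs_of_pos (exp_pos _)]
    apply mul_le_mul_of_nonneg_right ?_ (exp_pos _).le
    calc |(m + x) * x - σ^2| ≤ |(m+x)*x| + |σ^2| := abs_sub _ _
    _ ≤ (|m| + |x|) * |x| + σ^2 := by
        rw [abs_mul]
        gcongr
        · exact abs_add_le _ _
        · rw [abs_of_pos (by positivity)]
    _ = σ^2 + |m| * |x| + 1 * x^2 := by rw [← sq_abs x]; ring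
  · apply Measurable.aestronglyMeasurable
    exact (((measurable_const.add measurable_id).mul measurable_id).sub measurable_const).mul
      ((measurable_id.pow_const 2).neg.div_const _).exp

/-- IBP on `Ioi a`. -/
lemma ibp_Ioi (hσ : 0 < σ) (m a : ℝ) :
    ∫ x in Ioi a, ((m + x) * x - σ^2) * rexp (-x^2/(2*σ^2))
      = σ^2 * ((m + a) * rexp (-a^2/(2*σ^2))) := by
  have := integral_Ioi_of_hasDerivAt_of_tendsto
    (f := fun x : ℝ => -σ^2 * ((m + x) * rexp (-x^2/(2*σ^2))))
    (f' := fun x => ((m + x) * x - σ^2) * rexp (-x^2/(2*σ^2))) (a := a) (m := 0)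
    (hasDerivAt_F hσ m a).continuousAt.continuousWithinAt
    (fun x _ => hasDerivAt_F hσ m x)
    (int_ibp hσ m).integrableOn
    (by simpa using (tendsto_poly_gauss hσ m).const_mul (-σ^2))
  rw [this]; ring

/-- IBP on `Iic b`. -/
lemma ibp_Iic (hσ : 0 < σ) (m b : ℝ) :
    ∫ x in Iic b, ((m + x) * x - σ^2) * rexp (-x^2/(2*σ^2))
      = -σ^2 * ((m + b) * rexp (-b^2/(2*σ^2))) := by
  have := integral_Iic_of_hasDerivAt_of_tendsto
    (f := fun x : ℝ => -σ^2 * ((m + x) * rexp (-x^2/(2*σ^2))))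
    (f' := fun x => ((m + x) * x - σ^2) * rexp (-x^2/(2*σ^2))) (a := b) (m := 0)
    (hasDerivAt_F hσ m b).continuousAt.continuousWithinAt
    (fun x _ => hasDerivAt_F hσ m x)
    (int_ibp hσ m).integrableOn
    (by simpa using (tendsto_poly_gauss_bot hσ m).const_mul (-σ^2))
  rw [this]; ring

end ScoreAux2

namespace ScoreAux3
open ScoreAux ScoreAux2

variable {σ : ℝ}

lemma conv_gauss (hσ : 0 < σ) {t : ℝ} (ht : 0 < t) (c : ℝ) :
    ∫ x : ℝ, rexp (-(x - c)^2/(2*t^2)) * rexp (-x^2/(2*σ^2))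
      = Real.sqrt (2*π) * (t*σ/Real.sqrt (σ^2+t^2)) * rexp (-c^2/(2*(σ^2+t^2))) := by
  set s2 : ℝ := σ^2 + t^2 with hs2def
  have hs2 : 0 < s2 := by positivity
  set B : ℝ := s2/(2*t^2*σ^2) with hBdef
  have hB : 0 < B := by positivity
  set d : ℝ := c*σ^2/s2 with hddef
  have hpt : ∀ x : ℝ, rexp (-(x - c)^2/(2*t^2)) * rexp (-x^2/(2*σ^2))
      = rexp (-c^2/(2*s2)) * rexp (-B*(x-d)^2) := by
    intro x
    rw [← Real.exp_add, ← Real.exp_add]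
    congr 1
    rw [hBdef, hddef, hs2def]
    field_simp
    ring
  simp_rw [hpt]
  rw [integral_const_mul]
  have hshift : ∫ x : ℝ, rexp (-B*(x-d)^2) = ∫ x : ℝ, rexp (-B*x^2) :=
    integral_sub_right_eq_self (fun x => rexp (-B*x^2)) d
  rw [hshift, integral_gaussian]
  have h1 : π / B = (2*π) * (t*σ/Real.sqrt s2)^2 := by
    rw [div_pow, Real.sq_sqrt hs2.le, hBdef]
    field_simp
  rw [h1, Real.sqrt_mul (by positivity), Real.sqrt_sq (by positivity)]
  ring

lemma hasDerivAt_F2 (hσ : 0 < σ) (x : ℝ) :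
    HasDerivAt (fun x : ℝ => -σ^2 * rexp (-x^2/(2*σ^2)))
      (x * rexp (-x^2/(2*σ^2))) x := by
  have h1 : HasDerivAt (fun x : ℝ => -x^2/(2*σ^2)) (-x/σ^2) x := by
    have := ((hasDerivAt_pow 2 x).neg).div_const (2*σ^2)
    refine this.congr_deriv ?_
    field_simp; ring
  have h2 := (h1.exp).const_mul (-σ^2)
  refine h2.congr_deriv ?_
  field_simp

lemma int_xexp_Ioi (hσ : 0 < σ) (a : ℝ) :
    ∫ x in Set.Ioi a, x * rexp (-x^2/(2*σ^2)) = σ^2 * rexp (-a^2/(2*σ^2)) := by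
  have := MeasureTheory.integral_Ioi_of_hasDerivAt_of_tendsto
    (f := fun x : ℝ => -σ^2 * rexp (-x^2/(2*σ^2)))
    (f' := fun x => x * rexp (-x^2/(2*σ^2))) (a := a) (m := 0)
    (hasDerivAt_F2 hσ a).continuousAt.continuousWithinAt
    (fun x _ => hasDerivAt_F2 hσ x)
    (int_id_exp hσ).integrableOn
    (by simpa using (tendsto_exp_gauss hσ).const_mul (-σ^2))
  rw [this]; ring

lemma int_xexp_Iic (hσ : 0 < σ) (b : ℝ) :
    ∫ x in Set.Iic b, x * rexp (-x^2/(2*σ^2)) = -(σ^2 * rexp (-b^2/(2*σ^2))) := by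
  have htb : Filter.Tendsto (fun x : ℝ => -σ^2 * rexp (-x^2/(2*σ^2))) Filter.atBot (nhds 0) := by
    have h := (tendsto_exp_gauss hσ).comp Filter.tendsto_neg_atBot_atTop
    have h2 : Filter.Tendsto (fun x : ℝ => rexp (-x^2/(2*σ^2))) Filter.atBot (nhds 0) := by
      refine Filter.Tendsto.congr ?_ h
      intro x; simp [Function.comp, neg_sq]
    simpa using h2.const_mul (-σ^2)
  have := MeasureTheory.integral_Iic_of_hasDerivAt_of_tendsto
    (f := fun x : ℝ => -σ^2 * rexp (-x^2/(2*σ^2)))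
    (f' := fun x => x * rexp (-x^2/(2*σ^2))) (a := b) (m := 0)
    (hasDerivAt_F2 hσ b).continuousAt.continuousWithinAt
    (fun x _ => hasDerivAt_F2 hσ x)
    (int_id_exp hσ).integrableOn htb
  rw [this]; ring

lemma int_xexp (hσ : 0 < σ) : ∫ x : ℝ, x * rexp (-x^2/(2*σ^2)) = 0 := by
  rw [← intervalIntegral.integral_Iic_add_Ioi (b := (0:ℝ))
    (int_id_exp hσ).integrableOn (int_id_exp hσ).integrableOn,
    int_xexp_Ioi hσ, int_xexp_Iic hσ]
  ring

lemma int_sq_sub_exp (hσ : 0 < σ) :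
    ∫ x : ℝ, ((0 + x) * x - σ^2) * rexp (-x^2/(2*σ^2)) = 0 := by
  rw [← intervalIntegral.integral_Iic_add_Ioi (b := (0:ℝ))
    (int_ibp hσ 0).integrableOn (int_ibp hσ 0).integrableOn,
    ibp_Ioi hσ 0 0, ibp_Iic hσ 0 0]
  ring

end ScoreAux3


namespace ScoreAux4
open ScoreAux ScoreAux2 ScoreAux3

noncomputable def rho (σ : ℝ) (x : ℝ) : ℝ := (Real.sqrt (2*π) * σ)⁻¹ * rexp (-x^2/(2*σ^2))

variable {σ lam t : ℝ}

lemma rho_pos (hσ : 0 < σ) (x : ℝ) : 0 < rho σ x := by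
  unfold rho; positivity

lemma measurable_rho : Measurable (rho σ) :=
  (((measurable_id.pow_const 2).neg.div_const _).exp.const_mul _)

lemma int_rho_int (hσ : 0 < σ) : Integrable (rho σ) := by
  unfold rho; exact (int_exp hσ).const_mul _

lemma int_dom_rho (hσ : 0 < σ) {f : ℝ → ℝ} (hf : Measurable f) (c0 c1 c2 : ℝ)
    (hb : ∀ x, |f x| ≤ c0 + c1*|x| + c2*x^2) :
    Integrable (fun x => f x * rho σ x) := by
  apply int_dom hσ (hf.mul measurable_rho).aestronglyMeasurable
    (c0 * (Real.sqrt (2*π) * σ)⁻¹) (c1 * (Real.sqrt (2*π) * σ)⁻¹) (c2 * (Real.sqrt (2*π) * σ)⁻¹)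
  intro x
  have h1 : |f x * rho σ x| = |f x| * ((Real.sqrt (2*π) * σ)⁻¹ * rexp (-x^2/(2*σ^2))) := by
    rw [abs_mul, abs_of_pos (rho_pos hσ x)]; rfl
  rw [Pi.mul_apply, h1]
  calc |f x| * ((Real.sqrt (2*π) * σ)⁻¹ * rexp (-x^2/(2*σ^2)))
      ≤ (c0 + c1*|x| + c2*x^2) * ((Real.sqrt (2*π) * σ)⁻¹ * rexp (-x^2/(2*σ^2))) := by
        apply mul_le_mul_of_nonneg_right (hb x) (by positivity)
    _ = _ := by ring

lemma rho_eq_pdf (hσ : 0 < σ) :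
    ProbabilityTheory.gaussianPDFReal 0 ⟨σ^2, sq_nonneg σ⟩ = rho σ := by
  funext x
  unfold rho ProbabilityTheory.gaussianPDFReal
  simp only [NNReal.coe_mk, sub_zero]
  congr 2
  rw [Real.sqrt_mul (by positivity : (0:ℝ) ≤ 2*π)]
  exact congrArg (fun r => Real.sqrt (2*π) * r) (Real.sqrt_sq hσ.le)

lemma int_rho_one (hσ : 0 < σ) : ∫ x, rho σ x = 1 := by
  have hv : (⟨σ^2, sq_nonneg σ⟩ : NNReal) ≠ 0 := by
    intro hcon
    have h2 : (σ:ℝ)^2 = 0 := congrArg NNReal.toReal hcon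
    nlinarith
  rw [← rho_eq_pdf hσ]
  exact ProbabilityTheory.integral_gaussianPDFReal_eq_one 0 hv

lemma int_id_rho (hσ : 0 < σ) : ∫ x, x * rho σ x = 0 := by
  have h1 : (fun x : ℝ => x * rho σ x)
      = fun x => (Real.sqrt (2*π)*σ)⁻¹ * (x * rexp (-x^2/(2*σ^2))) := by
    funext x; unfold rho; ring
  rw [h1, integral_const_mul, int_xexp hσ, mul_zero]

lemma int_sq_rho_val (hσ : 0 < σ) : ∫ x, x^2 * rho σ x = σ^2 := by
  have h1 : (fun x : ℝ => x^2 * rho σ x)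
      = fun x => (Real.sqrt (2*π)*σ)⁻¹ * (((0+x)*x - σ^2) * rexp (-x^2/(2*σ^2)))
          + σ^2 * rho σ x := by
    funext x; unfold rho; ring
  rw [h1, integral_add ((int_ibp hσ 0).const_mul _) ((int_rho_int hσ).const_mul _),
    integral_const_mul, int_sq_sub_exp hσ, integral_const_mul, int_rho_one hσ]
  ring

lemma conv_rho (hσ : 0 < σ) (ht : 0 < t) (c : ℝ) :
    ∫ x, rexp (-(x-c)^2/(2*t^2)) * rho σ x
      = t/Real.sqrt (σ^2+t^2) * rexp (-c^2/(2*(σ^2+t^2))) := by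
  have h1 : (fun x : ℝ => rexp (-(x-c)^2/(2*t^2)) * rho σ x)
      = fun x => (Real.sqrt (2*π)*σ)⁻¹ * (rexp (-(x-c)^2/(2*t^2)) * rexp (-x^2/(2*σ^2))) := by
    funext x; unfold rho; ring
  rw [h1, integral_const_mul, conv_gauss hσ ht c]
  have h2π : Real.sqrt (2*π) ≠ 0 := by positivity
  have hs : Real.sqrt (σ^2+t^2) ≠ 0 := by positivity
  field_simp

lemma stein (hσ : 0 < σ) (hlam : 0 < lam) (m : ℝ) :
    ∫ x, (σ^2 * (if lam < |m + x| then (1:ℝ) else 0) - x * HT lam (m + x)) * rho σ x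
      = -(σ^2 * lam * (Real.sqrt (2*π)*σ)⁻¹ *
          (rexp (-(lam - m)^2/(2*σ^2)) + rexp (-(lam + m)^2/(2*σ^2)))) := by
  have hba : (-lam - m : ℝ) < lam - m := by linarith
  have hae : (fun x => (σ^2 * (if lam < |m + x| then (1:ℝ) else 0) - x * HT lam (m + x)) * rho σ x)
      =ᵐ[(volume : Measure ℝ)] (Set.Iic (-lam - m) ∪ Set.Ioi (lam - m)).indicator
        (fun x => (-(Real.sqrt (2*π)*σ)⁻¹) * (((m + x) * x - σ^2) * rexp (-x^2/(2*σ^2)))) := by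
    have h1 : ∀ᵐ x : ℝ, x ≠ lam - m := by
      rw [ae_iff]
      have : {x : ℝ | ¬x ≠ lam - m} = {lam - m} := by ext y; simp
      rw [this]
      exact measure_singleton _
    have h2 : ∀ᵐ x : ℝ, x ≠ -lam - m := by
      rw [ae_iff]
      have : {x : ℝ | ¬x ≠ -lam - m} = {-lam - m} := by ext y; simp
      rw [this]
      exact measure_singleton _
    filter_upwards [h1, h2] with x hxa hxb
    by_cases hc : lam < |m + x|
    · have hx_mem : x ∈ Set.Iic (-lam - m) ∪ Set.Ioi (lam - m) := by
        rcases lt_abs.mp hc with hgt | hgt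
        · right; simp only [Set.mem_Ioi]; linarith
        · left; simp only [Set.mem_Iic]; linarith
      rw [Set.indicator_of_mem hx_mem]
      have hHT : HT lam (m + x) = m + x := by rw [HT, if_neg (not_lt.2 hc.le)]
      rw [if_pos hc, hHT]
      unfold rho; ring
    · have habs : |m + x| < lam := by
        rcases (not_lt.mp hc).lt_or_eq with hlt | heq
        · exact hlt
        · exfalso
          rcases abs_eq hlam.le |>.mp heq with he | he
          · exact hxa (by linarith)
          · exact hxb (by linarith)
      have hx_not : x ∉ Set.Iic (-lam - m) ∪ Set.Ioi (lam - m) := by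
        have hlt1 := (abs_lt.mp habs).1
        have hlt2 := (abs_lt.mp habs).2
        simp only [Set.mem_union, Set.mem_Iic, Set.mem_Ioi, not_or, not_le, not_lt]
        constructor <;> linarith
      rw [Set.indicator_of_notMem hx_not]
      have hHT : HT lam (m + x) = 0 := by rw [HT, if_pos habs]
      rw [if_neg hc, hHT]
      ring
  rw [integral_congr_ae hae, integral_indicator (measurableSet_Iic.union measurableSet_Ioi),
    setIntegral_union (Set.Iic_disjoint_Ioi hba.le) measurableSet_Ioi
      ((int_ibp hσ m).const_mul _).integrableOn ((int_ibp hσ m).const_mul _).integrableOn,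
    integral_const_mul, integral_const_mul, ibp_Iic hσ m (-lam - m), ibp_Ioi hσ m (lam - m)]
  have e1 : (-lam - m : ℝ)^2 = (lam + m)^2 := by ring
  have e2 : (m + (-lam - m) : ℝ) = -lam := by ring
  have e3 : (m + (lam - m) : ℝ) = lam := by ring
  rw [e1, e2, e3]
  ring

end ScoreAux4

namespace ScoreAux5
open ScoreAux ScoreAux2 ScoreAux3 ScoreAux4

noncomputable def gfun (σ lam t m x : ℝ) : ℝ :=
  (m + x - HT lam (m + x))^2 +
    2*σ^2*((if lam < |m + x| then (1:ℝ) else 0) +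
      lam * Real.sqrt (σ^2 + t^2) / (Real.sqrt (2*π) * σ * t) *
        (rexp (-(m + x + lam)^2/(2*t^2)) + rexp (-(m + x - lam)^2/(2*t^2))))

noncomputable def qfun (lam m x : ℝ) : ℝ := (HT lam (m + x) - m)^2

variable {σ lam t : ℝ}

lemma exp_nonpos_le_one {u d : ℝ} (hd : 0 ≤ d) : rexp (-u^2/d) ≤ 1 := by
  apply Real.exp_le_one_iff.mpr
  apply div_nonpos_of_nonpos_of_nonneg (neg_nonpos.2 (sq_nonneg _)) hd

lemma meas_HTm (lam m : ℝ) : Measurable (fun x : ℝ => HT lam (m + x)) := by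
  have h : (fun x : ℝ => HT lam (m + x))
      = (fun y : ℝ => if |y| < lam then (0:ℝ) else y) ∘ (fun x : ℝ => m + x) := rfl
  rw [h]
  exact (measurable_HTfun lam).comp (measurable_const.add measurable_id)

lemma meas_ind (lam m : ℝ) : Measurable (fun x : ℝ => if lam < |m + x| then (1:ℝ) else 0) :=
  Measurable.ite (measurableSet_lt measurable_const
    (measurable_const.add measurable_id).abs) measurable_const measurable_const

lemma abs_HT_le (lam y : ℝ) : |HT lam y| ≤ |y| := by
  rw [HT]
  split_ifs
  · simp [abs_nonneg]
  · exact le_refl _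

lemma integrable_g_rho (hσ : 0 < σ) (hlam : 0 < lam) (ht : 0 < t) (m : ℝ) :
    MeasureTheory.Integrable (fun x => gfun σ lam t m x * rho σ x) := by
  set c : ℝ := lam * Real.sqrt (σ^2 + t^2) / (Real.sqrt (2*π) * σ * t) with hc
  have hc0 : 0 ≤ c := by rw [hc]; positivity
  apply int_dom_rho hσ (f := gfun σ lam t m) ?_ (lam^2 + 2*σ^2*(1 + c * 2)) 0 0
  · intro x
    have hHT : (m + x - HT lam (m + x))^2 ≤ lam^2 := by
      rw [HT]
      split_ifs with hcase
      · simp only [sub_zero]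
        calc (m+x)^2 = |m+x|^2 := (sq_abs _).symm
        _ ≤ lam^2 := by apply pow_le_pow_left₀ (abs_nonneg _) hcase.le
      · simp only [sub_self]
        nlinarith [sq_nonneg lam]
    have hind0 : 0 ≤ (if lam < |m + x| then (1:ℝ) else 0) := by split_ifs <;> norm_num
    have hind1 : (if lam < |m + x| then (1:ℝ) else 0) ≤ 1 := by split_ifs <;> norm_num
    have he1 : rexp (-(m + x + lam)^2/(2*t^2)) ≤ 1 := exp_nonpos_le_one (by positivity)
    have he2 : rexp (-(m + x - lam)^2/(2*t^2)) ≤ 1 := exp_nonpos_le_one (by positivity)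
    have hep1 := (Real.exp_pos (-(m + x + lam)^2/(2*t^2))).le
    have hep2 := (Real.exp_pos (-(m + x - lam)^2/(2*t^2))).le
    have hgn : 0 ≤ gfun σ lam t m x := by
      rw [gfun, ← hc]
      positivity
    rw [abs_of_nonneg hgn, gfun, ← hc]
    have hkey : 2*σ^2*((if lam < |m + x| then (1:ℝ) else 0)
        + c * (rexp (-(m + x + lam)^2/(2*t^2)) + rexp (-(m + x - lam)^2/(2*t^2))))
        ≤ 2*σ^2*(1 + c * 2) := by
      apply mul_le_mul_of_nonneg_left ?_ (by positivity)
      have := mul_le_mul_of_nonneg_left (add_le_add he1 he2) hc0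
      linarith
    have h0x : (0:ℝ) * |x| = 0 := by ring
    have h0x2 : (0:ℝ) * x^2 = 0 := by ring
    rw [h0x, h0x2]
    linarith
  · apply Measurable.add
    · exact ((measurable_const.add measurable_id).sub (meas_HTm lam m)).pow_const 2
    · apply Measurable.const_mul
      apply Measurable.add (meas_ind lam m)
      apply Measurable.const_mul
      exact ((((measurable_const.add measurable_id).add_const _).pow_const 2).neg.div_const
        _).exp.add ((((measurable_const.add measurable_id).sub_const _).pow_const
        2).neg.div_const _).exp

lemma integrable_q_rho (hσ : 0 < σ) (m : ℝ) :
    MeasureTheory.Integrable (fun x => qfun lam m x * rho σ x) := by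
  apply int_dom_rho hσ (f := qfun lam m)
    (((meas_HTm lam m).sub_const _).pow_const 2) (2*m^2) 0 2
  intro x
  rw [qfun, HT]
  have h0x : (0:ℝ) * |x| = 0 := by ring
  rw [h0x]
  split_ifs
  · rw [abs_of_nonneg (by positivity)]
    nlinarith [sq_nonneg x, sq_nonneg m]
  · have h2 : (m + x - m)^2 = x^2 := by ring
    rw [h2, abs_of_nonneg (by positivity)]
    nlinarith [sq_nonneg m, sq_nonneg x]

lemma integrable_sq_rho (hσ : 0 < σ) :
    MeasureTheory.Integrable (fun x : ℝ => x^2 * rho σ x) := by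
  apply int_dom_rho hσ (f := fun x : ℝ => x^2) (measurable_id.pow_const 2) 0 0 1
  intro x
  rw [abs_of_nonneg (sq_nonneg x)]
  nlinarith [abs_nonneg x]

lemma integrable_id_rho (hσ : 0 < σ) :
    MeasureTheory.Integrable (fun x : ℝ => x * rho σ x) := by
  apply int_dom_rho hσ (f := fun x : ℝ => x) measurable_id 0 1 0
  intro x
  nlinarith [sq_nonneg x, abs_nonneg x]

lemma integrable_stein_rho (hσ : 0 < σ) (m : ℝ) :
    MeasureTheory.Integrable (fun x =>
      (σ^2 * (if lam < |m + x| then (1:ℝ) else 0) - x * HT lam (m + x)) * rho σ x) := by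
  apply int_dom_rho hσ
    (f := fun x => σ^2 * (if lam < |m + x| then (1:ℝ) else 0) - x * HT lam (m + x))
    ((measurable_const.mul (meas_ind lam m)).sub (measurable_id.mul (meas_HTm lam m)))
    (σ^2) |m| 1
  intro x
  have h1 : |σ^2 * (if lam < |m + x| then (1:ℝ) else 0) - x * HT lam (m + x)|
      ≤ σ^2 * |if lam < |m + x| then (1:ℝ) else 0| + |x| * |HT lam (m + x)| := by
    calc _ ≤ |σ^2 * (if lam < |m + x| then (1:ℝ) else 0)| + |x * HT lam (m + x)| := abs_sub _ _
    _ = _ := by rw [abs_mul, abs_mul, abs_of_nonneg (sq_nonneg σ)]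
  have h2 : |if lam < |m + x| then (1:ℝ) else 0| ≤ 1 := by split_ifs <;> norm_num
  have h3 : |HT lam (m + x)| ≤ |m| + |x| := le_trans (abs_HT_le _ _) (abs_add_le _ _)
  have h4 : |x| * |HT lam (m + x)| ≤ |x| * (|m| + |x|) :=
    mul_le_mul_of_nonneg_left h3 (abs_nonneg x)
  have h5 : σ^2 * |if lam < |m + x| then (1:ℝ) else 0| ≤ σ^2 * 1 :=
    mul_le_mul_of_nonneg_left h2 (sq_nonneg σ)
  have h6 : |x| * (|m| + |x|) = |m| * |x| + x^2 := by rw [← sq_abs x]; ring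
  calc |σ^2 * (if lam < |m + x| then (1:ℝ) else 0) - x * HT lam (m + x)|
      ≤ σ^2 * 1 + |x| * (|m| + |x|) := h1.trans (add_le_add h5 h4)
    _ = σ^2 + |m| * |x| + 1 * x^2 := by rw [h6]; ring

lemma integrable_exp_rho (hσ : 0 < σ) {d : ℝ} (hd : 0 ≤ d) (c : ℝ) :
    MeasureTheory.Integrable (fun x : ℝ => rexp (-(x - c)^2/d) * rho σ x) := by
  apply int_dom_rho hσ (f := fun x : ℝ => rexp (-(x - c)^2/d))
    ((((measurable_id.sub_const _).pow_const 2).neg.div_const _).exp) 1 0 0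
  intro x
  rw [abs_of_pos (Real.exp_pos _)]
  have := exp_nonpos_le_one (u := x - c) (d := d) hd
  nlinarith [sq_nonneg x, abs_nonneg x]

end ScoreAux5

namespace ScoreAux6
open ScoreAux ScoreAux2 ScoreAux3 ScoreAux4 ScoreAux5

variable {σ lam t : ℝ}

lemma mul_exp_neg_le (z : ℝ) : z * rexp (-z) ≤ rexp (-1) := by
  have h1 : z ≤ rexp (z - 1) := by
    have := Real.add_one_le_exp (z - 1)
    linarith
  have h2 := mul_le_mul_of_nonneg_right h1 (Real.exp_pos (-z)).le
  calc z * rexp (-z) ≤ rexp (z-1) * rexp (-z) := h2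
  _ = rexp (-1) := by rw [← Real.exp_add]; congr 1; ring

lemma exp_diff_bound {u a b : ℝ} (hb : 0 < b) (hba : b ≤ a) (hu : 0 ≤ u) :
    0 ≤ rexp (-u/a) - rexp (-u/b) ∧
      rexp (-u/a) - rexp (-u/b) ≤ (a-b)/(Real.exp 1 * b) := by
  have ha : 0 < a := lt_of_lt_of_le hb hba
  have hfrac : u/a ≤ u/b := by gcongr
  constructor
  · have : -u/b ≤ -u/a := by rw [neg_div, neg_div]; linarith
    have := Real.exp_le_exp.2 this
    linarith
  · have hz : 0 ≤ u/b - u/a := by linarith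
    have key1 : rexp (-u/a) - rexp (-u/b) = rexp (-u/a) * (1 - rexp (-(u/b - u/a))) := by
      rw [mul_sub, mul_one, ← Real.exp_add]
      have harg : -u/a + -(u/b - u/a) = -u/b := by ring
      rw [harg]
    have key2 : 1 - rexp (-(u/b - u/a)) ≤ u/b - u/a := by
      have := Real.add_one_le_exp (-(u/b - u/a))
      linarith
    have key3 : rexp (-u/a) * u ≤ a / Real.exp 1 := by
      have h1 := mul_exp_neg_le (u/a)
      have h2 := mul_le_mul_of_nonneg_right h1 ha.le
      have h3 : u/a * rexp (-(u/a)) * a = rexp (-u/a) * u := by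
        rw [neg_div]
        field_simp
      have h4 : rexp (-1) * a = a / Real.exp 1 := by
        rw [Real.exp_neg]
        field_simp
      rw [h3] at h2
      rw [← h4]
      exact h2
    have step1 : rexp (-u/a) - rexp (-u/b) ≤ rexp (-u/a) * (u/b - u/a) := by
      rw [key1]
      exact mul_le_mul_of_nonneg_left key2 (Real.exp_pos _).le
    have step2 : rexp (-u/a) * (u/b - u/a) = (rexp (-u/a) * u) * ((a-b)/(a*b)) := by
      field_simp
    have hab0 : 0 ≤ (a-b)/(a*b) := by
      apply div_nonneg (by linarith) (by positivity)
    have step3 : (rexp (-u/a) * u) * ((a-b)/(a*b)) ≤ (a / Real.exp 1) * ((a-b)/(a*b)) :=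
      mul_le_mul_of_nonneg_right key3 hab0
    have step4 : (a / Real.exp 1) * ((a-b)/(a*b)) = (a-b)/(Real.exp 1 * b) := by
      have he : Real.exp 1 ≠ 0 := Real.exp_ne_zero 1
      field_simp
    calc rexp (-u/a) - rexp (-u/b) ≤ rexp (-u/a) * (u/b - u/a) := step1
    _ = (rexp (-u/a) * u) * ((a-b)/(a*b)) := step2
    _ ≤ (a / Real.exp 1) * ((a-b)/(a*b)) := step3
    _ = (a-b)/(Real.exp 1 * b) := step4


lemma meas_gfun (σ lam t m : ℝ) : Measurable (gfun σ lam t m) := by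
  apply Measurable.add
  · exact ((measurable_const.add measurable_id).sub (meas_HTm lam m)).pow_const 2
  · apply Measurable.const_mul
    apply Measurable.add (meas_ind lam m)
    apply Measurable.const_mul
    exact ((((measurable_const.add measurable_id).add_const _).pow_const 2).neg.div_const
      _).exp.add ((((measurable_const.add measurable_id).sub_const _).pow_const
      2).neg.div_const _).exp

lemma meas_qfun (lam m : ℝ) : Measurable (qfun lam m) :=
  ((meas_HTm lam m).sub_const _).pow_const 2

lemma coord_eq (hσ : 0 < σ) (hlam : 0 < lam) (ht : 0 < t) (m : ℝ) :
    (∫ x, gfun σ lam t m x * rho σ x) - ∫ x, qfun lam m x * rho σ x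
      = σ^2 + 2*σ^2*lam*(Real.sqrt (2*π)*σ)⁻¹ *
        ((rexp (-(lam+m)^2/(2*(σ^2+t^2))) - rexp (-(lam+m)^2/(2*σ^2))) +
         (rexp (-(lam-m)^2/(2*(σ^2+t^2))) - rexp (-(lam-m)^2/(2*σ^2)))) := by
  set c : ℝ := lam * Real.sqrt (σ^2 + t^2) / (Real.sqrt (2*π) * σ * t) with hc
  rw [← MeasureTheory.integral_sub (integrable_g_rho hσ hlam ht m) (integrable_q_rho hσ m)]
  have hpt : (fun x => gfun σ lam t m x * rho σ x - qfun lam m x * rho σ x)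
      = fun x => x^2 * rho σ x + (2*m) * (x * rho σ x)
          + 2 * ((σ^2*(if lam < |m+x| then (1:ℝ) else 0) - x * HT lam (m+x)) * rho σ x)
          + (2*σ^2*c) * (rexp (-(x - (-m-lam))^2/(2*t^2)) * rho σ x)
          + (2*σ^2*c) * (rexp (-(x - (lam-m))^2/(2*t^2)) * rho σ x) := by
    funext x
    rw [gfun, qfun, ← hc,
      show (x - (-m-lam))^2 = (m+x+lam)^2 by ring,
      show (x - (lam-m))^2 = (m+x-lam)^2 by ring]
    ring
  rw [hpt]
  have iA := integrable_sq_rho hσ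
  have iB := (integrable_id_rho hσ).const_mul (2*m)
  have iC := (integrable_stein_rho (lam := lam) hσ m).const_mul 2
  have iD := (integrable_exp_rho hσ (d := 2*t^2) (by positivity) (-m-lam)).const_mul (2*σ^2*c)
  have iE := (integrable_exp_rho hσ (d := 2*t^2) (by positivity) (lam-m)).const_mul (2*σ^2*c)
  have s1 : ∫ x, (x^2 * rho σ x + (2*m) * (x * rho σ x))
      = (∫ x, x^2 * rho σ x) + (∫ x, (2*m) * (x * rho σ x)) := MeasureTheory.integral_add iA iB
  have s2 : ∫ x, (x^2 * rho σ x + (2*m) * (x * rho σ x) + 2 * ((σ^2*(if lam < |m+x| then (1:ℝ) else 0) - x * HT lam (m+x)) * rho σ x))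
      = (∫ x, (x^2 * rho σ x + (2*m) * (x * rho σ x))) + (∫ x, 2 * ((σ^2*(if lam < |m+x| then (1:ℝ) else 0) - x * HT lam (m+x)) * rho σ x)) := MeasureTheory.integral_add (iA.add iB) iC
  have s3 : ∫ x, (x^2 * rho σ x + (2*m) * (x * rho σ x) + 2 * ((σ^2*(if lam < |m+x| then (1:ℝ) else 0) - x * HT lam (m+x)) * rho σ x) + (2*σ^2*c) * (rexp (-(x - (-m-lam))^2/(2*t^2)) * rho σ x))
      = (∫ x, (x^2 * rho σ x + (2*m) * (x * rho σ x) + 2 * ((σ^2*(if lam < |m+x| then (1:ℝ) else 0) - x * HT lam (m+x)) * rho σ x))) + (∫ x, (2*σ^2*c) * (rexp (-(x - (-m-lam))^2/(2*t^2)) * rho σ x)) :=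
    MeasureTheory.integral_add ((iA.add iB).add iC) iD
  have s4 : ∫ x, (x^2 * rho σ x + (2*m) * (x * rho σ x) + 2 * ((σ^2*(if lam < |m+x| then (1:ℝ) else 0) - x * HT lam (m+x)) * rho σ x) + (2*σ^2*c) * (rexp (-(x - (-m-lam))^2/(2*t^2)) * rho σ x) + (2*σ^2*c) * (rexp (-(x - (lam-m))^2/(2*t^2)) * rho σ x))
      = (∫ x, (x^2 * rho σ x + (2*m) * (x * rho σ x) + 2 * ((σ^2*(if lam < |m+x| then (1:ℝ) else 0) - x * HT lam (m+x)) * rho σ x) + (2*σ^2*c) * (rexp (-(x - (-m-lam))^2/(2*t^2)) * rho σ x))) + (∫ x, (2*σ^2*c) * (rexp (-(x - (lam-m))^2/(2*t^2)) * rho σ x)) :=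
    MeasureTheory.integral_add (((iA.add iB).add iC).add iD) iE
  rw [s4, s3, s2, s1,
    MeasureTheory.integral_const_mul, MeasureTheory.integral_const_mul,
    MeasureTheory.integral_const_mul, MeasureTheory.integral_const_mul,
    int_sq_rho_val hσ, int_id_rho hσ, stein hσ hlam m,
    conv_rho hσ ht (-m-lam), conv_rho hσ ht (lam-m),
    show ((-m-lam:ℝ))^2 = (lam+m)^2 by ring]
  have hcts : c * (t / Real.sqrt (σ^2+t^2)) = lam * (Real.sqrt (2*π)*σ)⁻¹ := by
    rw [hc]
    have h1 : Real.sqrt (σ^2+t^2) ≠ 0 := by positivity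
    have h2 : Real.sqrt (2*π) ≠ 0 := by positivity
    field_simp
  linear_combination (2*σ^2*(rexp (-(lam+m)^2/(2*(σ^2+t^2)))
    + rexp (-(lam-m)^2/(2*(σ^2+t^2))))) * hcts

lemma coord_bound (hσ : 0 < σ) (hlam : 0 < lam) (ht : 0 < t) (m : ℝ) :
    |((∫ x, gfun σ lam t m x * rho σ x) - ∫ x, qfun lam m x * rho σ x) - σ^2|
      ≤ 4*lam*(Real.sqrt (2*π)*σ)⁻¹/Real.exp 1 * t^2 := by
  rw [coord_eq hσ hlam ht m, add_sub_cancel_left]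
  have hval : (2*(σ^2+t^2) - 2*σ^2)/(Real.exp 1 * (2*σ^2)) = t^2/(Real.exp 1 * σ^2) := by
    have he : Real.exp 1 ≠ 0 := Real.exp_ne_zero 1
    have hs : σ ≠ 0 := hσ.ne'
    field_simp
    ring
  obtain ⟨h1a, h1b⟩ := exp_diff_bound (u := (lam+m)^2) (a := 2*(σ^2+t^2)) (b := 2*σ^2)
    (by positivity) (by nlinarith [sq_nonneg t]) (sq_nonneg _)
  obtain ⟨h2a, h2b⟩ := exp_diff_bound (u := (lam-m)^2) (a := 2*(σ^2+t^2)) (b := 2*σ^2)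
    (by positivity) (by nlinarith [sq_nonneg t]) (sq_nonneg _)
  rw [hval] at h1b h2b
  have hK0 : (0:ℝ) < (Real.sqrt (2*π)*σ)⁻¹ := by positivity
  have hnn : 0 ≤ 2*σ^2*lam*(Real.sqrt (2*π)*σ)⁻¹ *
      ((rexp (-(lam+m)^2/(2*(σ^2+t^2))) - rexp (-(lam+m)^2/(2*σ^2))) +
       (rexp (-(lam-m)^2/(2*(σ^2+t^2))) - rexp (-(lam-m)^2/(2*σ^2)))) := by
    apply mul_nonneg (by positivity) (by linarith)
  rw [abs_of_nonneg hnn]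
  have hsum : (rexp (-(lam+m)^2/(2*(σ^2+t^2))) - rexp (-(lam+m)^2/(2*σ^2))) +
      (rexp (-(lam-m)^2/(2*(σ^2+t^2))) - rexp (-(lam-m)^2/(2*σ^2)))
      ≤ 2 * (t^2/(Real.exp 1 * σ^2)) := by linarith
  calc 2*σ^2*lam*(Real.sqrt (2*π)*σ)⁻¹ * _ ≤ 2*σ^2*lam*(Real.sqrt (2*π)*σ)⁻¹ *
      (2 * (t^2/(Real.exp 1 * σ^2))) := by
        apply mul_le_mul_of_nonneg_left hsum (by positivity)
  _ = 4*lam*(Real.sqrt (2*π)*σ)⁻¹/Real.exp 1 * t^2 := by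
      have he : Real.exp 1 ≠ 0 := Real.exp_ne_zero 1
      have hs : σ ≠ 0 := hσ.ne'
      field_simp
      ring

end ScoreAux6

namespace ScoreAux7
open ScoreAux ScoreAux2 ScoreAux3 ScoreAux4 ScoreAux5 ScoreAux6

lemma transfer {Ω : Type*} [MeasurableSpace Ω] (μpr : Measure Ω) [IsProbabilityMeasure μpr]
    {σ : ℝ} (hσ : 0 < σ) {Wf : Ω → ℝ} (hW : Measurable Wf)
    (hd : Measure.map Wf μpr = ProbabilityTheory.gaussianReal 0 ⟨σ^2, sq_nonneg σ⟩)
    {f : ℝ → ℝ} (hf : Measurable f)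
    (hint : MeasureTheory.Integrable (fun x => f x * rho σ x)) :
    MeasureTheory.Integrable (fun ω => f (Wf ω)) μpr ∧
      ∫ ω, f (Wf ω) ∂μpr = ∫ x, f x * rho σ x := by
  have hv : (⟨σ^2, sq_nonneg σ⟩ : NNReal) ≠ 0 := by
    intro hcon
    have h2 : (σ:ℝ)^2 = 0 := congrArg NNReal.toReal hcon
    nlinarith
  have hγ : ProbabilityTheory.gaussianReal 0 ⟨σ^2, sq_nonneg σ⟩
      = volume.withDensity (ProbabilityTheory.gaussianPDF 0 ⟨σ^2, sq_nonneg σ⟩) :=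
    ProbabilityTheory.gaussianReal_of_var_ne_zero 0 hv
  have hI : MeasureTheory.Integrable f (Measure.map Wf μpr) := by
    rw [hd, hγ]
    refine (integrable_withDensity_iff (ProbabilityTheory.measurable_gaussianPDF _ _)
      (ae_of_all _ fun x => ENNReal.ofReal_lt_top)).mpr ?_
    refine hint.congr (ae_of_all _ fun x => ?_)
    show f x * rho σ x = f x * (ProbabilityTheory.gaussianPDF 0 ⟨σ^2, sq_nonneg σ⟩ x).toReal
    rw [show ProbabilityTheory.gaussianPDF 0 ⟨σ^2, sq_nonneg σ⟩ x
        = ENNReal.ofReal (ProbabilityTheory.gaussianPDFReal 0 ⟨σ^2, sq_nonneg σ⟩ x) from rfl]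
    exact congrArg (f x * ·) ((congrFun (rho_eq_pdf hσ) x).symm.trans
      (ENNReal.toReal_ofReal (ProbabilityTheory.gaussianPDFReal_nonneg _ _ _)).symm)
  constructor
  · exact (integrable_map_measure hf.aestronglyMeasurable hW.aemeasurable).mp hI
  · calc ∫ ω, f (Wf ω) ∂μpr = ∫ x, f x ∂(Measure.map Wf μpr) :=
        (integral_map hW.aemeasurable hf.aestronglyMeasurable).symm
    _ = ∫ x, f x ∂(volume.withDensity (ProbabilityTheory.gaussianPDF 0 ⟨σ^2, sq_nonneg σ⟩)) := by
        rw [hd, hγ]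
    _ = ∫ x, f x * rho σ x := by
        have hg : (ProbabilityTheory.gaussianPDF 0 ⟨σ^2, sq_nonneg σ⟩) = fun x =>
            (((ProbabilityTheory.gaussianPDFReal 0 ⟨σ^2, sq_nonneg σ⟩ x).toNNReal : NNReal)
              : ENNReal) := by
          funext x; rfl
        rw [hg]
        refine (integral_withDensity_eq_integral_smul
          ((ProbabilityTheory.measurable_gaussianPDFReal _ _).real_toNNReal) _).trans ?_
        congr 1
        funext x
        rw [NNReal.smul_def, smul_eq_mul]
        have e : ((ProbabilityTheory.gaussianPDFReal 0 ⟨σ^2, sq_nonneg σ⟩ x).toNNReal : ℝ)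
            = rho σ x := (Real.coe_toNNReal _ (ProbabilityTheory.gaussianPDFReal_nonneg _ _ _)).trans
              (congrFun (rho_eq_pdf hσ) x)
        exact (congrArg (· * f x) e).trans (mul_comm _ _)

end ScoreAux7

end AUX

/-- asymptotic unbiasedness of SCORE as a risk estimator:
`(1/P)(E[SCORE(Y, λ, h(P))] − E‖HT(Y,λ) − x0‖²) → 0` as `P → ∞`. -/
theorem score_asymptotic_unbiasedness
    {Ω : Type*} [MeasurableSpace Ω] (μpr : Measure Ω) [IsProbabilityMeasure μpr]
    (σ lam : ℝ) (hσ : 0 < σ) (hlam : 0 < lam)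
    (x0 : ℕ → ℝ) (W : ℕ → Ω → ℝ)
    (hmeas : ∀ i, Measurable (W i))
    (hindep : iIndepFun W μpr)
    (hdist : ∀ i, Measure.map (W i) μpr = gaussianReal 0 ⟨σ ^ 2, sq_nonneg σ⟩)
    (h : ℕ → ℝ) (hpos : ∀ P, 0 < h P)
    (hh0 : Tendsto h atTop (nhds 0)) :
    Tendsto
      (fun P : ℕ => (1 / (P : ℝ)) *
        ((∫ ω, SCORE σ lam (h P) P (fun i => x0 i + W i ω) ∂μpr) -
          ∫ ω', ∑ i ∈ Finset.range P, (HT lam (x0 i + W i ω') - x0 i) ^ 2 ∂μpr))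
      atTop (nhds 0) := by
  classical
  open ScoreAux ScoreAux2 ScoreAux3 ScoreAux4 ScoreAux5 ScoreAux6 ScoreAux7 in
  set C : ℝ := 4*lam*(Real.sqrt (2*π)*σ)⁻¹/Real.exp 1 with hC
  have hC0 : 0 ≤ C := by rw [hC]; positivity
  have key : ∀ P : ℕ, |(1 / (P : ℝ)) *
      ((∫ ω, SCORE σ lam (h P) P (fun i => x0 i + W i ω) ∂μpr) -
        ∫ ω', ∑ i ∈ Finset.range P, (HT lam (x0 i + W i ω') - x0 i) ^ 2 ∂μpr)|
      ≤ C * (h P)^2 := by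
    intro P
    have ht : 0 < h P := hpos P
    set t := h P with htdef
    -- transfer per coordinate
    have htrg : ∀ i : ℕ,
        MeasureTheory.Integrable (fun ω => gfun σ lam t (x0 i) (W i ω)) μpr ∧
          ∫ ω, gfun σ lam t (x0 i) (W i ω) ∂μpr = ∫ x, gfun σ lam t (x0 i) x * rho σ x :=
      fun i => transfer μpr hσ (hmeas i) (hdist i) (meas_gfun σ lam t (x0 i))
        (integrable_g_rho hσ hlam ht (x0 i))
    have htrq : ∀ i : ℕ,
        MeasureTheory.Integrable (fun ω => qfun lam (x0 i) (W i ω)) μpr ∧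
          ∫ ω, qfun lam (x0 i) (W i ω) ∂μpr = ∫ x, qfun lam (x0 i) x * rho σ x :=
      fun i => transfer μpr hσ (hmeas i) (hdist i) (meas_qfun lam (x0 i))
        (integrable_q_rho hσ (x0 i))
    -- pointwise rewriting of SCORE
    have hSCORE : ∀ ω, SCORE σ lam t P (fun i => x0 i + W i ω)
        = (∑ i ∈ Finset.range P, gfun σ lam t (x0 i) (W i ω)) - P * σ^2 := by
      intro ω
      simp only [SCORE, EDOF, gfun, Finset.sum_add_distrib, ← Finset.mul_sum]
      ring
    have hRISK : ∀ ω, ∑ i ∈ Finset.range P, (HT lam (x0 i + W i ω) - x0 i) ^ 2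
        = ∑ i ∈ Finset.range P, qfun lam (x0 i) (W i ω) := by
      intro ω
      simp only [qfun]
    -- the two Ω-integrals
    have hInt1 : ∫ ω, SCORE σ lam t P (fun i => x0 i + W i ω) ∂μpr
        = (∑ i ∈ Finset.range P, ∫ x, gfun σ lam t (x0 i) x * rho σ x) - P * σ^2 := by
      simp only [hSCORE]
      rw [MeasureTheory.integral_sub
        (MeasureTheory.integrable_finset_sum _ (fun i _ => (htrg i).1))
        (MeasureTheory.integrable_const _),
        MeasureTheory.integral_finset_sum _ (fun i _ => (htrg i).1)]
      simp only [MeasureTheory.integral_const, MeasureTheory.measure_univ, ENNReal.toReal_one, probReal_univ,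
        smul_eq_mul, one_mul]
      congr 1
      exact Finset.sum_congr rfl (fun i _ => (htrg i).2)
    have hInt2 : ∫ ω', ∑ i ∈ Finset.range P, (HT lam (x0 i + W i ω') - x0 i) ^ 2 ∂μpr
        = ∑ i ∈ Finset.range P, ∫ x, qfun lam (x0 i) x * rho σ x := by
      simp only [hRISK]
      rw [MeasureTheory.integral_finset_sum _ (fun i _ => (htrq i).1)]
      exact Finset.sum_congr rfl (fun i _ => (htrq i).2)
    rw [hInt1, hInt2]
    have hdiff : (∑ i ∈ Finset.range P, ∫ x, gfun σ lam t (x0 i) x * rho σ x) - P * σ^2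
        - ∑ i ∈ Finset.range P, ∫ x, qfun lam (x0 i) x * rho σ x
        = ∑ i ∈ Finset.range P,
            (((∫ x, gfun σ lam t (x0 i) x * rho σ x) - ∫ x, qfun lam (x0 i) x * rho σ x) - σ^2) := by
      rw [Finset.sum_sub_distrib, Finset.sum_sub_distrib, Finset.sum_const,
        Finset.card_range, nsmul_eq_mul]
      ring
    rw [hdiff]
    have habs : |∑ i ∈ Finset.range P,
        (((∫ x, gfun σ lam t (x0 i) x * rho σ x) - ∫ x, qfun lam (x0 i) x * rho σ x) - σ^2)|
        ≤ (P : ℝ) * (C * t^2) := by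
      calc _ ≤ ∑ i ∈ Finset.range P,
          |((∫ x, gfun σ lam t (x0 i) x * rho σ x) - ∫ x, qfun lam (x0 i) x * rho σ x) - σ^2| :=
            Finset.abs_sum_le_sum_abs _ _
      _ ≤ ∑ _i ∈ Finset.range P, C * t^2 :=
            Finset.sum_le_sum (fun i _ => by
              have := coord_bound hσ hlam ht (x0 i)
              rw [← hC] at this
              exact this)
      _ = (P : ℝ) * (C * t^2) := by
            rw [Finset.sum_const, Finset.card_range, nsmul_eq_mul]
    rw [abs_mul]
    have h1P : |1 / (P : ℝ)| = 1 / (P : ℝ) := abs_of_nonneg (by positivity)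
    rw [h1P]
    rcases Nat.eq_zero_or_pos P with hP0 | hPpos
    · subst hP0
      simp only [Finset.range_zero, Finset.sum_empty, abs_zero, mul_zero]
      positivity
    · have hPne : (P : ℝ) ≠ 0 := Nat.cast_ne_zero.2 hPpos.ne'
      calc 1 / (P : ℝ) * |∑ i ∈ Finset.range P, _| ≤ 1 / (P : ℝ) * ((P : ℝ) * (C * t^2)) := by
            apply mul_le_mul_of_nonneg_left habs (by positivity)
      _ = C * t^2 := by field_simp
  have hlim : Tendsto (fun P : ℕ => C * (h P)^2) atTop (nhds 0) := by
    have h2 := (hh0.mul hh0).const_mul C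
    simp only [mul_zero] at h2
    refine Tendsto.congr (fun P => by ring) h2
  exact squeeze_zero_norm (fun P => by
    rw [Real.norm_eq_abs]; exact key P) hlim
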